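/- Let A : ℝ^d → ℝ^d be an orthogonal projection (a linear map with A ∘ A = A and A self-adjoint), let F : ℝ^d → ℝ be continuous and bounded, define f = F ∘ A, let δ > 0, and define the smoothed function f̂(w) = E_{v ~ Unif(B^d)}[f(w + δ v)]. Then for every w ∈ ℝ^d at which f̂ is differentiable, A(∇f̂(w)) = ∇f̂(w); that is, the gradient of the smoothed loss lies in the range of A. -/

import Mathlib

open MeasureTheory Metric
open scoped RealInnerProductSpace

/-- The uniform (normalized Lebesgue) probability measure on the closed unit ball
of `ℝ^d`. -/
noncomputable def ballUniform (d : ℕ) : Measure (EuclideanSpace ℝ (Fin d)) :=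
  (volume (closedBall (0 : EuclideanSpace ℝ (Fin d)) 1))⁻¹ •
    volume.restrict (closedBall (0 : EuclideanSpace ℝ (Fin d)) 1)

/-- The smoothed function `f̂(w) = 𝔼_{v ~ Unif(B^d)}[f (w + δ v)]`. -/
noncomputable def smoothed (d : ℕ) (δ : ℝ) (f : EuclideanSpace ℝ (Fin d) → ℝ)
    (w : EuclideanSpace ℝ (Fin d)) : ℝ :=
  ∫ v, f (w + δ • v) ∂(ballUniform d)

/-- **The gradient of the smoothed projected loss lies in the range of the projection.**
If `A` is an orthogonal projection of `ℝ^d`, `F` is continuous and bounded,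
`f = F ∘ A`, and `f̂` is the ball-smoothed version of `f`, then at every point `w`
where `f̂` is differentiable, `A (∇ f̂ (w)) = ∇ f̂ (w)`. -/
theorem orthogonalProjection_gradient_smoothed_comp
    (d : ℕ)
    (A : EuclideanSpace ℝ (Fin d) →ₗ[ℝ] EuclideanSpace ℝ (Fin d))
    (hidem : A ∘ₗ A = A)
    (hsa : ∀ x y : EuclideanSpace ℝ (Fin d), ⟪A x, y⟫ = ⟪x, A y⟫)
    (F : EuclideanSpace ℝ (Fin d) → ℝ) (hFcont : Continuous F)
    (C : ℝ) (hFbdd : ∀ x, |F x| ≤ C)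
    (δ : ℝ) (hδ : 0 < δ)
    (w : EuclideanSpace ℝ (Fin d))
    (hdiff : DifferentiableAt ℝ (smoothed d δ (F ∘ A)) w) :
    A (gradient (smoothed d δ (F ∘ A)) w) = gradient (smoothed d δ (F ∘ A)) w := by
  set fhat := smoothed d δ (F ∘ A) with hfhat
  -- fhat is invariant along the kernel of A
  have hker : ∀ u : EuclideanSpace ℝ (Fin d), A u = 0 → ∀ t : ℝ, fhat (w + t • u) = fhat w := by
    intro u hu t
    simp only [hfhat, smoothed]
    refine integral_congr_ae (Filter.Eventually.of_forall fun v => ?_)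
    simp [Function.comp, map_add, _root_.map_smul, hu]
  -- directional derivative along kernel directions vanishes
  have hdir : ∀ u : EuclideanSpace ℝ (Fin d), A u = 0 → fderiv ℝ fhat w u = 0 := by
    intro u hu
    have hline : HasDerivAt (fun t : ℝ => w + t • u) u 0 := by
      simpa using ((hasDerivAt_id (0 : ℝ)).smul_const u).const_add w
    have hcomp : HasDerivAt (fun t : ℝ => fhat (w + t • u)) (fderiv ℝ fhat w u) 0 := by
      have hw : HasFDerivAt fhat (fderiv ℝ fhat w) (w + (0:ℝ) • u) := by
        simpa using hdiff.hasFDerivAt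
      exact (hw.comp_hasDerivAt 0 hline)
    have hconst : (fun t : ℝ => fhat (w + t • u)) = fun _ => fhat w := funext fun t => hker u hu t
    rw [hconst] at hcomp
    exact hcomp.unique (hasDerivAt_const 0 (fhat w))
  have hgrad : ∀ x : EuclideanSpace ℝ (Fin d), ⟪gradient fhat w, x⟫ = fderiv ℝ fhat w x := by
    intro x
    simp [gradient, InnerProductSpace.toDual_symm_apply]
  refine ext_inner_right ℝ fun x => ?_
  have hx : A (x - A x) = 0 := by
    have := congrArg (fun B => B x) hidem
    simp only [LinearMap.comp_apply] at this
    simp [map_sub, this]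
  calc ⟪A (gradient fhat w), x⟫ = ⟪gradient fhat w, A x⟫ := hsa _ _
    _ = fderiv ℝ fhat w (A x) := hgrad _
    _ = fderiv ℝ fhat w x := by
        have h0 := hdir (x - A x) hx
        have := (fderiv ℝ fhat w).map_sub x (A x)
        rw [h0] at this
        linarith [this]
    _ = ⟪gradient fhat w, x⟫ := (hgrad _).symm
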